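/- (Deterministic form of Theorem 2.1(c): strong consistency of GAIC(γ).) Suppose k ≥ 1, γ > 2, and ψ_σ(λ_k) > √(2γ)·σ (equivalently, λ_k exceeds the threshold λ_γ = ψ_σ^{-1}(√(2γ)σ)). Then there exists N₀ such that for all N ≥ N₀, every γ-minimizer j* at N satisfies j* = k. -/

import Mathlib

open Filter

/-- For `σ > 0`, `ψ_σ(x) = x + σ²/x`. -/
noncomputable def psi (σ x : ℝ) : ℝ := x + σ ^ 2 / x

/-- The score `GAIC^γ_j(N) = (N/(2σ²)) Σ_{i=j+1}^{q} ℓ_i(N)² + γ(Nj − j(j−1)/2)`. -/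
noncomputable def GAIC (σ : ℝ) (q : ℕ) (ℓ : ℕ → ℕ → ℝ) (γ : ℝ) (j N : ℕ) : ℝ :=
  ((N : ℝ) / (2 * σ ^ 2)) * ∑ i ∈ Finset.Icc (j + 1) q, (ℓ i N) ^ 2
    + γ * ((N : ℝ) * (j : ℝ) - (j : ℝ) * ((j : ℝ) - 1) / 2)

/-- Deterministic form of Theorem 2.1(c): if `k ≥ 1`, `γ > 2` and
`ψ_σ(λ_k) > √(2γ)·σ`, then eventually every `γ`-minimizer `j*` satisfies `j* = k`. -/
theorem gaic_strong_consistency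
    (σ : ℝ) (hσ : 0 < σ) (q k : ℕ) (hq : 1 ≤ q) (hkq : k ≤ q)
    (lam : ℕ → ℝ)
    (hlam_anti : ∀ i j : ℕ, 1 ≤ i → i ≤ j → j ≤ k → lam j ≤ lam i)
    (hlam_gt : ∀ i : ℕ, 1 ≤ i → i ≤ k → σ < lam i)
    (ℓ : ℕ → ℕ → ℝ)
    (hℓ_anti : ∀ N i j : ℕ, 1 ≤ i → i ≤ j → j ≤ q → ℓ j N ≤ ℓ i N)
    (hspike : ∀ i : ℕ, 1 ≤ i → i ≤ k →
      Tendsto (fun N : ℕ => ℓ i N) atTop (nhds (psi σ (lam i))))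
    (hbulk : ∀ i : ℕ, k < i → i ≤ q →
      Tendsto (fun N : ℕ => ℓ i N) atTop (nhds (2 * σ)))
    (hk : 1 ≤ k) (γ : ℝ) (hγ : 2 < γ)
    (hthr : Real.sqrt (2 * γ) * σ < psi σ (lam k)) :
    ∃ N₀ : ℕ, ∀ N ≥ N₀, ∀ jstar : ℕ, jstar ≤ q →
      (∀ j : ℕ, j ≤ q → GAIC σ q ℓ γ jstar N ≤ GAIC σ q ℓ γ j N) → jstar = k := by
  classical
  set s : ℝ := Real.sqrt (2 * γ) * σ with hs_def
  have h2γ : (0:ℝ) < 2 * γ := by linarith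
  have hs_pos : 0 < s := mul_pos (Real.sqrt_pos.mpr h2γ) hσ
  have hs_sq : s ^ 2 = 2 * γ * σ ^ 2 := by
    rw [hs_def, mul_pow, Real.sq_sqrt h2γ.le]
  have hσ2 : (0:ℝ) < 2 * σ ^ 2 := by positivity
  have hA : ∀ᶠ N in atTop, s < ℓ k N :=
    (hspike k hk le_rfl).eventually (eventually_gt_nhds hthr)
  have hB : ∀ᶠ N in atTop, ∀ i ∈ Finset.Ioc k q, ℓ i N ^ 2 < (γ + 2) * σ ^ 2 := by
    refine (eventually_all_finset _).mpr ?_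
    intro i hi
    obtain ⟨hi1, hi2⟩ := Finset.mem_Ioc.mp hi
    have h4 : (2 * σ) ^ 2 < (γ + 2) * σ ^ 2 := by nlinarith [sq_nonneg σ, mul_pos hσ hσ]
    exact ((hbulk i hi1 hi2).pow 2).eventually (eventually_lt_nhds h4)
  have hC : ∀ᶠ N : ℕ in atTop, γ * (q:ℝ)^2 / (γ - 2) < (N:ℝ) :=
    tendsto_natCast_atTop_atTop.eventually_gt_atTop _
  have hD : ∀ᶠ N : ℕ in atTop, 1 ≤ N := eventually_ge_atTop 1
  obtain ⟨N₀, hN₀⟩ := eventually_atTop.mp (hA.and (hB.and (hC.and hD)))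
  refine ⟨N₀, fun N hN jstar hjq hmin => ?_⟩
  obtain ⟨h1, h2, h3, h4⟩ := hN₀ N hN
  have hNpos : (0:ℝ) < (N:ℝ) := by exact_mod_cast h4
  have hc' : γ * (q:ℝ)^2 < (N:ℝ) * (γ - 2) := by
    rw [div_lt_iff₀ (by linarith)] at h3; linarith [h3]
  have sum_split : ∀ a b : ℕ, a ≤ b → b ≤ q →
      ∑ i ∈ Finset.Icc (a+1) q, ℓ i N ^ 2
        = (∑ i ∈ Finset.Ioc a b, ℓ i N ^ 2) + ∑ i ∈ Finset.Icc (b+1) q, ℓ i N ^ 2 := by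
    intro a b hab hbq
    rw [Finset.Icc_add_one_left_eq_Ioc, Finset.Icc_add_one_left_eq_Ioc, Finset.sum_Ioc_consecutive _ hab hbq]
  have key : ∀ j : ℕ, j ≤ q → j ≠ k → GAIC σ q ℓ γ k N < GAIC σ q ℓ γ j N := by
    intro j hjq' hne
    rcases lt_or_gt_of_ne hne with hjk | hjk
    · -- j < k : underestimation
      have hS : ((k - j : ℕ):ℝ) * (2 * γ * σ ^ 2) < ∑ i ∈ Finset.Ioc j k, ℓ i N ^ 2 := by
        have hne' : (Finset.Ioc j k).Nonempty := ⟨k, Finset.mem_Ioc.mpr ⟨hjk, le_rfl⟩⟩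
        calc ((k - j : ℕ):ℝ) * (2 * γ * σ ^ 2)
            = ∑ _i ∈ Finset.Ioc j k, (2 * γ * σ ^ 2) := by
              rw [Finset.sum_const, Nat.card_Ioc, nsmul_eq_mul]
          _ < ∑ i ∈ Finset.Ioc j k, ℓ i N ^ 2 := by
              refine Finset.sum_lt_sum_of_nonempty hne' ?_
              intro i hi
              obtain ⟨hi1, hi2⟩ := Finset.mem_Ioc.mp hi
              have hle : ℓ k N ≤ ℓ i N := hℓ_anti N i k ((Nat.zero_le j).trans_lt hi1) hi2 hkq
              have : s < ℓ i N := lt_of_lt_of_le h1 hle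
              calc 2 * γ * σ ^ 2 = s ^ 2 := hs_sq.symm
                _ < ℓ i N ^ 2 := by nlinarith [hs_pos]
      have jr_lt : (j:ℝ) < (k:ℝ) := by exact_mod_cast hjk
      have hcast : ((k - j : ℕ):ℝ) = (k:ℝ) - (j:ℝ) := by
        rw [Nat.cast_sub hjk.le]
      have t1 : (N:ℝ) * γ * ((k:ℝ) - (j:ℝ))
          < (N:ℝ) / (2 * σ ^ 2) * ∑ i ∈ Finset.Ioc j k, ℓ i N ^ 2 := by
        have := mul_lt_mul_of_pos_left hS (div_pos hNpos hσ2)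
        have heq : (N:ℝ) / (2 * σ ^ 2) * (((k - j : ℕ):ℝ) * (2 * γ * σ ^ 2))
            = (N:ℝ) * γ * ((k:ℝ) - (j:ℝ)) := by
          rw [hcast]; field_simp
        linarith [this, heq.ge, heq.le]
      have jr_nonneg : (0:ℝ) ≤ (j:ℝ) := Nat.cast_nonneg j
      have jk1 : (j:ℝ) + 1 ≤ (k:ℝ) := by exact_mod_cast hjk
      have t2 : γ * ((N:ℝ) * (k:ℝ) - (k:ℝ) * ((k:ℝ) - 1) / 2)
          ≤ γ * ((N:ℝ) * (j:ℝ) - (j:ℝ) * ((j:ℝ) - 1) / 2) + (N:ℝ) * γ * ((k:ℝ) - (j:ℝ)) := by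
        linarith [mul_nonneg (by linarith : (0:ℝ) ≤ γ)
          (mul_nonneg (by linarith : (0:ℝ) ≤ (k:ℝ) - (j:ℝ))
            (by linarith : (0:ℝ) ≤ (k:ℝ) + (j:ℝ) - 1))]
      unfold GAIC
      rw [sum_split j k hjk.le hkq, mul_add]
      linarith
    · -- k < j : overestimation
      have hT : ∑ i ∈ Finset.Ioc k j, ℓ i N ^ 2 ≤ ((j - k : ℕ):ℝ) * ((γ + 2) * σ ^ 2) := by
        calc ∑ i ∈ Finset.Ioc k j, ℓ i N ^ 2
            ≤ ∑ _i ∈ Finset.Ioc k j, ((γ + 2) * σ ^ 2) := by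
              refine Finset.sum_le_sum ?_
              intro i hi
              obtain ⟨hi1, hi2⟩ := Finset.mem_Ioc.mp hi
              exact (h2 i (Finset.mem_Ioc.mpr ⟨hi1, hi2.trans hjq'⟩)).le
          _ = ((j - k : ℕ):ℝ) * ((γ + 2) * σ ^ 2) := by
              rw [Finset.sum_const, Nat.card_Ioc, nsmul_eq_mul]
      have kr_lt : (k:ℝ) < (j:ℝ) := by exact_mod_cast hjk
      have hcast : ((j - k : ℕ):ℝ) = (j:ℝ) - (k:ℝ) := by
        rw [Nat.cast_sub hjk.le]
      have t1 : (N:ℝ) / (2 * σ ^ 2) * ∑ i ∈ Finset.Ioc k j, ℓ i N ^ 2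
          ≤ (N:ℝ) * ((j:ℝ) - (k:ℝ)) * (γ + 2) / 2 := by
        have := mul_le_mul_of_nonneg_left hT (div_pos hNpos hσ2).le
        have heq : (N:ℝ) / (2 * σ ^ 2) * (((j - k : ℕ):ℝ) * ((γ + 2) * σ ^ 2))
            = (N:ℝ) * ((j:ℝ) - (k:ℝ)) * (γ + 2) / 2 := by
          rw [hcast]; field_simp
        linarith [this, heq.le, heq.ge]
      have kr1 : (1:ℝ) ≤ (k:ℝ) := by exact_mod_cast hk
      have jrq : (j:ℝ) ≤ (q:ℝ) := by exact_mod_cast hjq'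
      have jkr1 : (k:ℝ) + 1 ≤ (j:ℝ) := by exact_mod_cast hjk
      have hjj : (j:ℝ) * ((j:ℝ) - 1) ≤ (q:ℝ) * (q:ℝ) :=
        mul_le_mul jrq (by linarith) (by linarith) (by linarith)
      have hkk : (0:ℝ) ≤ (k:ℝ) * ((k:ℝ) - 1) := mul_nonneg (by linarith) (by linarith)
      have e1 : (N:ℝ) * (γ - 2) ≤ (N:ℝ) * ((j:ℝ) - (k:ℝ)) * (γ - 2) := by
        have hx : (0:ℝ) ≤ (N:ℝ) * (γ - 2) := mul_nonneg hNpos.le (by linarith)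
        calc (N:ℝ) * (γ - 2) ≤ ((j:ℝ) - (k:ℝ)) * ((N:ℝ) * (γ - 2)) :=
              le_mul_of_one_le_left hx (by linarith)
          _ = (N:ℝ) * ((j:ℝ) - (k:ℝ)) * (γ - 2) := by ring
      have e2 : γ * ((j:ℝ) * ((j:ℝ) - 1)) ≤ γ * ((q:ℝ) * (q:ℝ)) :=
        mul_le_mul_of_nonneg_left hjj (by linarith)
      have e3 : (0:ℝ) ≤ γ * ((k:ℝ) * ((k:ℝ) - 1)) :=
        mul_nonneg (by linarith) hkk
      have t2 : (N:ℝ) * ((j:ℝ) - (k:ℝ)) * (γ + 2) / 2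
          < γ * ((N:ℝ) * (j:ℝ) - (j:ℝ) * ((j:ℝ) - 1) / 2)
            - γ * ((N:ℝ) * (k:ℝ) - (k:ℝ) * ((k:ℝ) - 1) / 2) := by
        linarith [e1, e2, e3, hc']
      unfold GAIC
      rw [sum_split k j hjk.le hjq', mul_add]
      linarith
  by_contra hne
  have h5 := key jstar hjq hne
  have h6 := hmin k hkq
  linarith
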